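/- Let X, Y be normed spaces, U ⊆ X open, and f : U → Y a function such that the directional derivative ∂_x f(u) = lim_{t→0} (f(u+tx) − f(u))/t exists for every u ∈ U and x ∈ X, and for each fixed x the map u ↦ ∂_x f(u) is continuous. Then for each u ∈ U, the map x ↦ ∂_x f(u) is additive and homogeneous (linear) in x. -/

import Mathlib

open Filter Topology Metric Set

lemma dirDeriv_hasDerivAt {X Y : Type*} [NormedAddCommGroup X] [NormedSpace ℝ X]
    [NormedAddCommGroup Y] [NormedSpace ℝ Y]
    {U : Set X} {f : X → Y} {D : X → X → Y}
    (hD : ∀ u ∈ U, ∀ x : X,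
      Tendsto (fun t : ℝ => t⁻¹ • (f (u + t • x) - f u)) (𝓝[≠] 0) (𝓝 (D u x)))
    (v y : X) (s₀ : ℝ) (hw : v + s₀ • y ∈ U) :
    HasDerivAt (fun s : ℝ => f (v + s • y)) (D (v + s₀ • y) y) s₀ := by
  rw [hasDerivAt_iff_tendsto_slope]
  have hsub : Tendsto (fun s : ℝ => s - s₀) (𝓝[≠] s₀) (𝓝[≠] 0) := by
    apply Tendsto.inf
    · simpa using (continuous_sub_right s₀).tendsto s₀
    · exact tendsto_principal_principal.2 fun s hs => sub_ne_zero.2 hs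
  refine ((hD _ hw y).comp hsub).congr fun s => ?_
  have h : v + s₀ • y + (s - s₀) • y = v + s • y := by module
  simp only [Function.comp, slope_def_module, h]

lemma key_tendsto {X Y : Type*} [NormedAddCommGroup X] [NormedSpace ℝ X]
    [NormedAddCommGroup Y] [NormedSpace ℝ Y]
    {U : Set X} (hU : IsOpen U) {f : X → Y} {D : X → X → Y}
    (hD : ∀ u ∈ U, ∀ x : X,
      Tendsto (fun t : ℝ => t⁻¹ • (f (u + t • x) - f u)) (𝓝[≠] 0) (𝓝 (D u x)))
    (hcont : ∀ x : X, ContinuousOn (fun u => D u x) U)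
    {u : X} (hu : u ∈ U) (x y : X) :
    Tendsto (fun t : ℝ => t⁻¹ • (f (u + t • x + t • y) - f (u + t • x))) (𝓝[≠] 0)
      (𝓝 (D u y)) := by
  rw [Metric.tendsto_nhds]
  intro ε hε
  -- get δ with ball u δ ⊆ U and ‖D v y - D u y‖ < ε/2 on the ball
  obtain ⟨δ₁, hδ₁, hball⟩ := Metric.isOpen_iff.1 hU u hu
  have hc : Tendsto (fun v => D v y) (𝓝 u) (𝓝 (D u y)) := by
    have := (hcont y u hu).tendsto
    rwa [nhdsWithin_eq_nhds.2 (hU.mem_nhds hu)] at this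
  have h2 := Metric.tendsto_nhds.1 hc (ε/2) (by linarith)
  obtain ⟨δ₂, hδ₂, hD2⟩ := Metric.eventually_nhds_iff_ball.1 h2
  set δ := min δ₁ δ₂ with hδdef
  have hδ : 0 < δ := lt_min hδ₁ hδ₂
  have hsmall : ∀ᶠ t : ℝ in 𝓝[≠] 0, |t| * (‖x‖ + ‖y‖ + 1) < δ := by
    apply eventually_nhdsWithin_of_eventually_nhds
    have hcontt : Continuous fun t : ℝ => |t| * (‖x‖ + ‖y‖ + 1) := by continuity
    have h0 : Tendsto (fun t : ℝ => |t| * (‖x‖ + ‖y‖ + 1)) (𝓝 0) (𝓝 0) :=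
      hcontt.tendsto' 0 0 (by simp)
    exact h0.eventually_lt_const hδ
  filter_upwards [hsmall, self_mem_nhdsWithin] with t ht htne
  have htne' : (t : ℝ) ≠ 0 := htne
  have habs : 0 < |t| := abs_pos.2 htne'
  -- points on segment lie in ball u δ
  have hmem : ∀ s : ℝ, |s| ≤ |t| → u + t • x + s • y ∈ ball u δ := by
    intro s hs
    rw [mem_ball, dist_eq_norm]
    have : u + t • x + s • y - u = t • x + s • y := by module
    rw [this]
    calc ‖t • x + s • y‖ ≤ ‖t • x‖ + ‖s • y‖ := norm_add_le _ _
      _ = |t| * ‖x‖ + |s| * ‖y‖ := by rw [norm_smul, norm_smul]; simp [Real.norm_eq_abs]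
      _ ≤ |t| * ‖x‖ + |t| * ‖y‖ := by nlinarith [norm_nonneg y]
      _ < |t| * (‖x‖ + ‖y‖ + 1) := by nlinarith
      _ < δ := ht
  have hmemU : ∀ s : ℝ, |s| ≤ |t| → u + t • x + s • y ∈ U := fun s hs =>
    hball (ball_subset_ball (min_le_left _ _) (hmem s hs))
  have hDmem : ∀ s : ℝ, |s| ≤ |t| → ‖D (u + t • x + s • y) y - D u y‖ ≤ ε / 2 := by
    intro s hs
    have := hD2 _ (ball_subset_ball (min_le_right _ _) (hmem s hs))
    rw [dist_eq_norm] at this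
    exact this.le
  -- derivative of g s = f(u+t•x+s•y) - s • D u y
  set v := u + t • x with hv
  have hg : ∀ s : ℝ, |s| ≤ |t| →
      HasDerivAt (fun s : ℝ => f (v + s • y) - s • D u y)
        (D (v + s • y) y - D u y) s := by
    intro s hs
    have h1 : HasDerivAt (fun s : ℝ => s • D u y) (D u y) s := by
      simpa using (hasDerivAt_id s).smul_const (D u y)
    exact (dirDeriv_hasDerivAt hD v y s (hmemU s hs)).sub h1
  -- MVT estimate
  have hest : ‖(f (v + t • y) - t • D u y) - (f (v + 0 • y) - (0:ℝ) • D u y)‖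
      ≤ ε / 2 * |t| := by
    rcases le_or_gt 0 t with hts | hts
    · have := norm_image_sub_le_of_norm_deriv_le_segment'
        (f := fun s : ℝ => f (v + s • y) - s • D u y)
        (f' := fun s => D (v + s • y) y - D u y) (a := 0) (b := t) (C := ε/2)
        (fun s hs => (hg s (by rw [abs_of_nonneg hs.1, abs_of_nonneg hts]; exact hs.2)).hasDerivWithinAt)
        (fun s hs => hDmem s (by rw [abs_of_nonneg hs.1, abs_of_nonneg hts]; exact hs.2.le))
        t ⟨hts, le_refl _⟩
      simpa [abs_of_nonneg hts] using this
    · have := norm_image_sub_le_of_norm_deriv_le_segment'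
        (f := fun s : ℝ => f (v + s • y) - s • D u y)
        (f' := fun s => D (v + s • y) y - D u y) (a := t) (b := 0) (C := ε/2)
        (fun s hs => (hg s (by rw [abs_of_nonpos hs.2, abs_of_neg hts]; linarith [hs.1])).hasDerivWithinAt)
        (fun s hs => hDmem s (by rw [abs_of_nonpos (hs.2.le), abs_of_neg hts]; linarith [hs.1]))
        0 ⟨le_of_lt hts, le_refl _⟩
      have h0 : ε / 2 * (0 - t) = ε / 2 * |t| := by rw [abs_of_neg hts]; ring
      rw [h0] at this
      simpa [norm_sub_rev] using this
  rw [dist_eq_norm]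
  have heq : t⁻¹ • (f (u + t • x + t • y) - f (u + t • x)) - D u y
      = t⁻¹ • ((f (v + t • y) - t • D u y) - (f (v + 0 • y) - (0:ℝ) • D u y)) := by
    simp only [hv, zero_smul, add_zero, sub_zero, smul_sub, smul_smul,
      inv_mul_cancel₀ htne', one_smul]
    abel
  rw [heq, norm_smul, Real.norm_eq_abs, abs_inv]
  calc |t|⁻¹ * ‖_‖ ≤ |t|⁻¹ * (ε / 2 * |t|) := by
        apply mul_le_mul_of_nonneg_left hest (by positivity)
    _ = ε / 2 := by field_simp
    _ < ε := by linarith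

/-- If all directional derivatives `∂ₓ f(u)` exist on an open set `U` and are continuous in
the base point `u` for each fixed direction `x`, then `x ↦ ∂ₓ f(u)` is additive and
homogeneous (linear) in `x` (Flett, Lemma 4.1.5). -/
theorem stmt6
    {X Y : Type*} [NormedAddCommGroup X] [NormedSpace ℝ X]
    [NormedAddCommGroup Y] [NormedSpace ℝ Y]
    (U : Set X) (hU : IsOpen U) (f : X → Y) (D : X → X → Y)
    (hD : ∀ u ∈ U, ∀ x : X,
      Tendsto (fun t : ℝ => t⁻¹ • (f (u + t • x) - f u)) (𝓝[≠] 0) (𝓝 (D u x)))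
    (hcont : ∀ x : X, ContinuousOn (fun u => D u x) U) :
    ∀ u ∈ U, (∀ x y : X, D u (x + y) = D u x + D u y) ∧
      (∀ (c : ℝ) (x : X), D u (c • x) = c • D u x) := by
  intro u hu
  constructor
  · intro x y
    have h2 : Tendsto (fun t : ℝ => t⁻¹ • (f (u + t • (x + y)) - f u)) (𝓝[≠] 0)
        (𝓝 (D u x + D u y)) := by
      refine ((hD u hu x).add (key_tendsto hU hD hcont hu x y)).congr fun t => ?_
      have harg : u + t • (x + y) = u + t • x + t • y := by module
      rw [harg, ← smul_add]
      congr 1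
      abel
    exact tendsto_nhds_unique (hD u hu (x + y)) h2
  · intro c x
    rcases eq_or_ne c 0 with rfl | hc
    · have h0 : Tendsto (fun t : ℝ => t⁻¹ • (f (u + t • ((0:ℝ) • x)) - f u)) (𝓝[≠] 0)
          (𝓝 (0 : Y)) := by
        have : (fun t : ℝ => t⁻¹ • (f (u + t • ((0:ℝ) • x)) - f u)) = fun _ => (0 : Y) := by
          funext t; simp
        rw [this]
        exact tendsto_const_nhds
      have := tendsto_nhds_unique (hD u hu ((0:ℝ) • x)) h0
      simpa using this
    · have hmul : Tendsto (fun t : ℝ => c * t) (𝓝[≠] 0) (𝓝[≠] 0) := by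
        apply Tendsto.inf
        · simpa using (by fun_prop :
            Continuous fun t : ℝ => c * t).tendsto' 0 0 (by simp)
        · exact tendsto_principal_principal.2 fun t ht => mul_ne_zero hc ht
      have h2 : Tendsto (fun t : ℝ => t⁻¹ • (f (u + t • (c • x)) - f u)) (𝓝[≠] 0)
          (𝓝 (c • D u x)) := by
        refine (((hD u hu x).comp hmul).const_smul c).congr fun t => ?_
        have harg : u + (c * t) • x = u + t • (c • x) := by
          rw [smul_smul, mul_comm]
        simp only [Function.comp]
        rw [smul_smul, mul_inv, ← mul_assoc, mul_inv_cancel₀ hc, one_mul, harg]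
      exact tendsto_nhds_unique (hD u hu (c • x)) h2
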